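/- In the boundary dynamical system on the edge z=0 with initial data p_0 = (x_0, y_0, 0), x_0 ∈ (0,1), and q_0 = (a_0, b_0, c_0) ∈ Σ, the sequence p_n converges to some p* = (x*, 1-x*, 0) with x* ∈ (0,1), and q_{2n} → q_[p*] - (2c_0 - 1)e₋₁(p*), q_{2n+1} → q_[p*] + (2c_0 - 1)e₋₁(p*), where q_[p*] = (1/2)(𝟏 - p*) and e₋₁((x,y,0)) = (1/2)(y, x, -1). -/
import Mathlib


open Matrix Filter

noncomputable def Mb (x : ℝ) : Matrix (Fin 3) (Fin 3) ℝ :=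
  !![0, 0, 1 - x; 0, 0, x; 1, 1, 0]

def inSimplex (v : Fin 3 → ℝ) : Prop := (∀ i, 0 ≤ v i) ∧ v 0 + v 1 + v 2 = 1

/-- In the boundary dynamical system on the edge `z = 0` with initial data
`p_0 = (x_0, 1-x_0, 0)`, `x_0 ∈ (0,1)`, `q_0 = (a_0,b_0,c_0) ∈ Σ`, the sequence
`p_n = (x_n, 1-x_n, 0)` converges to some `p* = (x*, 1-x*, 0)` with `x* ∈ (0,1)`, and
`q_{2n} → q_[p*] - (2c_0-1)e₋₁(p*)`, `q_{2n+1} → q_[p*] + (2c_0-1)e₋₁(p*)`, where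
`q_[p*] = ((1-x*)/2, x*/2, 1/2)` and `e₋₁(p*) = ((1-x*)/2, x*/2, -1/2)`. -/
theorem stmt12 (ρ : ℝ) (hρ : ρ ∈ Set.Ioo (0 : ℝ) 1)
    (x : ℕ → ℝ) (q : ℕ → Fin 3 → ℝ)
    (hx0 : x 0 ∈ Set.Ioo (0 : ℝ) 1) (hq0 : inSimplex (q 0))
    (hq : ∀ n, q (n + 1) = (Mb (x n)).mulVec (q n))
    (hx : ∀ n, x (n + 1) = (1 - ρ) * x n + ρ * (1 - q n 0 - q (n + 1) 0)) :
    ∃ xs : ℝ, xs ∈ Set.Ioo (0 : ℝ) 1 ∧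
      Tendsto (fun n => (![x n, 1 - x n, 0] : Fin 3 → ℝ)) atTop
        (nhds ![xs, 1 - xs, 0]) ∧
      Tendsto (fun n => q (2 * n)) atTop
        (nhds ![(1 - xs) / 2 - (2 * q 0 2 - 1) * ((1 - xs) / 2),
                xs / 2 - (2 * q 0 2 - 1) * (xs / 2),
                1 / 2 - (2 * q 0 2 - 1) * (-(1 / 2))]) ∧
      Tendsto (fun n => q (2 * n + 1)) atTop
        (nhds ![(1 - xs) / 2 + (2 * q 0 2 - 1) * ((1 - xs) / 2),
                xs / 2 + (2 * q 0 2 - 1) * (xs / 2),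
                1 / 2 + (2 * q 0 2 - 1) * (-(1 / 2))]) := by
  obtain ⟨hρ0, hρ1⟩ := hρ
  obtain ⟨hx00, hx01⟩ := hx0
  -- component recurrences
  have ha : ∀ n, q (n+1) 0 = (1 - x n) * q n 2 := by
    intro n
    rw [hq n]
    simp [Mb, Matrix.mulVec, dotProduct, Fin.sum_univ_three]
  have hb : ∀ n, q (n+1) 1 = x n * q n 2 := by
    intro n
    rw [hq n]
    simp [Mb, Matrix.mulVec, dotProduct, Fin.sum_univ_three]
  have hcsum : ∀ n, q (n+1) 2 = q n 0 + q n 1 := by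
    intro n
    rw [hq n]
    simp [Mb, Matrix.mulVec, dotProduct, Fin.sum_univ_three]
  -- invariant
  have inv : ∀ n, (0 < x n ∧ x n < 1) ∧ inSimplex (q n) := by
    intro n
    induction n with
    | zero => exact ⟨⟨hx00, hx01⟩, hq0⟩
    | succ n ih =>
      obtain ⟨⟨hxp, hxl⟩, hpos, hsum⟩ := ih
      have h0 := hpos 0
      have h1 := hpos 1
      have h2 := hpos 2
      have hS : inSimplex (q (n+1)) := by
        refine ⟨fun i => ?_, ?_⟩
        · fin_cases i
          · show 0 ≤ q (n+1) 0
            rw [ha n]; nlinarith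
          · show 0 ≤ q (n+1) 1
            rw [hb n]; positivity
          · show 0 ≤ q (n+1) 2
            rw [hcsum n]; linarith
        · rw [ha n, hb n, hcsum n]; nlinarith
      refine ⟨⟨?_, ?_⟩, hS⟩
      · have hA1 : q n 0 + q (n+1) 0 ≤ 1 := by rw [ha n]; nlinarith
        rw [hx n]; nlinarith
      · have hA0 : 0 ≤ q n 0 + q (n+1) 0 := by rw [ha n]; nlinarith
        rw [hx n]; nlinarith
  have hc01 : ∀ n, 0 ≤ q n 2 ∧ q n 2 ≤ 1 := by
    intro n
    obtain ⟨_, hpos, hsum⟩ := inv n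
    exact ⟨hpos 2, by nlinarith [hpos 0, hpos 1]⟩
  have hcflip : ∀ n, q (n+1) 2 = 1 - q n 2 := by
    intro n
    have hsum := (inv n).2.2
    rw [hcsum n]; linarith
  have hceven : ∀ n, q (2*n) 2 = q 0 2 := by
    intro n
    induction n with
    | zero => rfl
    | succ n ih =>
      have : 2*(n+1) = (2*n+1)+1 := by ring
      rw [this, hcflip, hcflip, ih]; ring
  have hcodd : ∀ n, q (2*n+1) 2 = 1 - q 0 2 := by
    intro n; rw [hcflip, hceven]
  -- difference recurrence
  have hd : ∀ n, x (n+2) - x (n+1) = -(ρ * q n 2) * (x (n+1) - x n) := by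
    intro n
    have e1 : x (n+2) = (1 - ρ) * x (n+1) + ρ * (1 - q (n+1) 0 - q (n+2) 0) := hx (n+1)
    have e2 : q (n+2) 0 = (1 - x (n+1)) * (1 - q n 2) := by
      rw [show n+2 = (n+1)+1 from rfl, ha (n+1), hcflip n]
    have e3 := ha n
    rw [e2, e3] at e1
    linarith [e1, mul_comm ρ (q n 2)]
  -- geometric decay of differences
  have hdle : ∀ n, |x (n+1) - x n| ≤ |x 1 - x 0| * ρ ^ n := by
    intro n
    induction n with
    | zero => simp
    | succ n ih =>
      obtain ⟨hc0, hc1⟩ := hc01 n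
      calc |x (n+2) - x (n+1)| = (ρ * q n 2) * |x (n+1) - x n| := by
            rw [hd n, abs_mul, abs_neg, abs_of_nonneg (by positivity)]
        _ ≤ ρ * |x (n+1) - x n| := by
            nlinarith [mul_nonneg (mul_nonneg hρ0.le (sub_nonneg.2 hc1))
              (abs_nonneg (x (n+1) - x n))]
        _ ≤ ρ * (|x 1 - x 0| * ρ ^ n) := mul_le_mul_of_nonneg_left ih hρ0.le
        _ = |x 1 - x 0| * ρ ^ (n+1) := by ring
  have hcauchy : CauchySeq x := by
    apply cauchySeq_of_le_geometric ρ (|x 1 - x 0|) hρ1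
    intro n
    rw [Real.dist_eq, abs_sub_comm]
    exact hdle n
  obtain ⟨xs, hxs⟩ := cauchySeq_tendsto_of_complete hcauchy
  -- all terms stay between x 0 and x 1
  set m := min (x 0) (x 1) with hm
  set M := max (x 0) (x 1) with hM
  have hbound : ∀ n, (m ≤ x n ∧ x n ≤ M) ∧ (m ≤ x (n+1) ∧ x (n+1) ≤ M) := by
    intro n
    induction n with
    | zero =>
      exact ⟨⟨min_le_left _ _, le_max_left _ _⟩, ⟨min_le_right _ _, le_max_right _ _⟩⟩
    | succ n ih =>
      obtain ⟨⟨h1, h2⟩, h3, h4⟩ := ih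
      obtain ⟨hc0, hc1⟩ := hc01 n
      have hdn := hd n
      have ht0 : 0 ≤ ρ * q n 2 := by positivity
      have ht1 : ρ * q n 2 ≤ 1 := by nlinarith
      exact ⟨⟨h3, h4⟩, by nlinarith, by nlinarith⟩
  have hmxs : m ≤ xs := ge_of_tendsto hxs (Eventually.of_forall fun n => (hbound n).1.1)
  have hMxs : xs ≤ M := le_of_tendsto hxs (Eventually.of_forall fun n => (hbound n).1.2)
  have hx10 : 0 < x 1 := (inv 1).1.1
  have hx11 : x 1 < 1 := (inv 1).1.2
  have hxs0 : 0 < xs := lt_of_lt_of_le (lt_min hx00 hx10) hmxs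
  have hxs1 : xs < 1 := lt_of_le_of_lt hMxs (max_lt hx01 hx11)
  -- subsequence limits
  have h2n : Tendsto (fun n : ℕ => 2*n) atTop atTop :=
    tendsto_atTop_atTop.mpr fun b => ⟨b, fun a ha => by omega⟩
  have h2n1 : Tendsto (fun n : ℕ => 2*n+1) atTop atTop :=
    tendsto_atTop_atTop.mpr fun b => ⟨b, fun a ha => by omega⟩
  have hxe : Tendsto (fun n => x (2*n)) atTop (nhds xs) := hxs.comp h2n
  have hxo : Tendsto (fun n => x (2*n+1)) atTop (nhds xs) := hxs.comp h2n1
  refine ⟨xs, ⟨hxs0, hxs1⟩, ?_, ?_, ?_⟩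
  · rw [tendsto_pi_nhds]
    intro i
    fin_cases i
    · exact hxs
    · exact tendsto_const_nhds.sub hxs
    · exact tendsto_const_nhds
  · rw [tendsto_pi_nhds]
    intro i
    fin_cases i
    · show Tendsto (fun n => q (2*n) 0) atTop (nhds ((1 - xs) / 2 - (2 * q 0 2 - 1) * ((1 - xs) / 2)))
      have hval : (1 - xs) / 2 - (2 * q 0 2 - 1) * ((1 - xs) / 2) = (1 - xs) * (1 - q 0 2) := by ring
      rw [hval]
      have key : Tendsto (fun n => (1 - x (2*n+1)) * (1 - q 0 2)) atTop
          (nhds ((1 - xs) * (1 - q 0 2))) :=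
        (tendsto_const_nhds.sub hxo).mul tendsto_const_nhds
      have heq : ∀ n, q (2*(n+1)) 0 = (1 - x (2*n+1)) * (1 - q 0 2) := by
        intro n
        rw [show 2*(n+1) = (2*n+1)+1 by ring, ha (2*n+1), hcodd n]
      have h' : Tendsto (fun n => q (2*(n+1)) 0) atTop (nhds ((1 - xs) * (1 - q 0 2))) :=
        key.congr fun n => (heq n).symm
      exact (tendsto_add_atTop_iff_nat 1).1 (h'.congr fun n => by norm_num [Nat.mul_add])
    · show Tendsto (fun n => q (2*n) 1) atTop (nhds (xs / 2 - (2 * q 0 2 - 1) * (xs / 2)))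
      have hval : xs / 2 - (2 * q 0 2 - 1) * (xs / 2) = xs * (1 - q 0 2) := by ring
      rw [hval]
      have key : Tendsto (fun n => x (2*n+1) * (1 - q 0 2)) atTop
          (nhds (xs * (1 - q 0 2))) := hxo.mul tendsto_const_nhds
      have heq : ∀ n, q (2*(n+1)) 1 = x (2*n+1) * (1 - q 0 2) := by
        intro n
        rw [show 2*(n+1) = (2*n+1)+1 by ring, hb (2*n+1), hcodd n]
      have h' : Tendsto (fun n => q (2*(n+1)) 1) atTop (nhds (xs * (1 - q 0 2))) :=
        key.congr fun n => (heq n).symm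
      exact (tendsto_add_atTop_iff_nat 1).1 (h'.congr fun n => by norm_num [Nat.mul_add])
    · show Tendsto (fun n => q (2*n) 2) atTop (nhds (1 / 2 - (2 * q 0 2 - 1) * (-(1 / 2))))
      have hval : 1 / 2 - (2 * q 0 2 - 1) * (-(1 / 2 : ℝ)) = q 0 2 := by ring
      rw [hval]
      exact tendsto_const_nhds.congr fun n => (hceven n).symm
  · rw [tendsto_pi_nhds]
    intro i
    fin_cases i
    · show Tendsto (fun n => q (2*n+1) 0) atTop (nhds ((1 - xs) / 2 + (2 * q 0 2 - 1) * ((1 - xs) / 2)))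
      have hval : (1 - xs) / 2 + (2 * q 0 2 - 1) * ((1 - xs) / 2) = (1 - xs) * q 0 2 := by ring
      rw [hval]
      have key : Tendsto (fun n => (1 - x (2*n)) * q 0 2) atTop
          (nhds ((1 - xs) * q 0 2)) := (tendsto_const_nhds.sub hxe).mul tendsto_const_nhds
      exact key.congr fun n => by rw [ha (2*n), hceven n]
    · show Tendsto (fun n => q (2*n+1) 1) atTop (nhds (xs / 2 + (2 * q 0 2 - 1) * (xs / 2)))
      have hval : xs / 2 + (2 * q 0 2 - 1) * (xs / 2) = xs * q 0 2 := by ring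
      rw [hval]
      have key : Tendsto (fun n => x (2*n) * q 0 2) atTop (nhds (xs * q 0 2)) :=
        hxe.mul tendsto_const_nhds
      exact key.congr fun n => by rw [hb (2*n), hceven n]
    · show Tendsto (fun n => q (2*n+1) 2) atTop (nhds (1 / 2 + (2 * q 0 2 - 1) * (-(1 / 2))))
      have hval : 1 / 2 + (2 * q 0 2 - 1) * (-(1 / 2 : ℝ)) = 1 - q 0 2 := by ring
      rw [hval]
      exact tendsto_const_nhds.congr fun n => (hcodd n).symm
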